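/- arXiv:2505.21253 — 3 statements merged into one kernel-verified Lean document; each statement's English description precedes it below -/
import Mathlib

section
/- Let G be a locally compact group with left Haar measure μ_G and modular function Δ_G, let H be a closed subgroup with left Haar measure μ_H and modular function Δ_H, and let q : G → G/H be the quotient map (G/H with the quotient topology). Let ρ : G → ℝ_{>0} be continuous with ρ(xh) = (Δ_H(h)/Δ_G(h)) · ρ(x) for all x ∈ G, h ∈ H. Let μ be a Radon measure on G/H satisfying: (Weil formula) for every f ∈ C_c(G), ∫_G f(x) ρ(x) dμ_G(x) = ∫_{G/H} F_f dμ, where F_f : G/H → ℂ is the (well-defined) function with F_f(q(y)) = ∫_H f(yh) dμ_H(h); and (strong quasi-invariance) for every x ∈ G and every Borel set E ⊆ G/H, μ(x • E) = ∫_E λ_x dμ, where λ_x : G/H → ℝ_{>0} is the (well-defined) function with λ_x(q(y)) = ρ(xy)/ρ(y). Then H is open in G if and only if μ({q(e)}) > 0, where q(e) ∈ G/H is the identity coset. -/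
open MeasureTheory Pointwise

/-- (Openness of a closed subgroup via a strongly quasi-invariant measure on
the quotient.) Let `G` be a locally compact group with left Haar measure `μG` and modular
function `ΔG`, `H` a closed subgroup with left Haar measure `μH` and modular function `ΔH`,
`ρ` a rho-function for the pair `(G, H)` and `μ` a Radon measure on `G ⧸ H` satisfying the
Weil formula and strong quasi-invariance relative to `ρ`. Then `H` is open in `G` iff
`μ({eH}) > 0`. -/
theorem stmt6 {G : Type*} [Group G] [TopologicalSpace G] [IsTopologicalGroup G]
    [T2Space G] [LocallyCompactSpace G] [MeasurableSpace G] [BorelSpace G]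
    (μG : Measure G) [μG.IsHaarMeasure]
    (ΔG : G → ℝ) (hΔGpos : ∀ g, 0 < ΔG g)
    (hΔG : ∀ g : G, Measure.map (fun x => x * g) μG = ENNReal.ofReal ((ΔG g)⁻¹) • μG)
    (H : Subgroup G) (hHclosed : IsClosed (H : Set G))
    (μH : Measure H) [μH.IsHaarMeasure]
    (ΔH : H → ℝ) (hΔHpos : ∀ h, 0 < ΔH h)
    (hΔH : ∀ h : H, Measure.map (fun x => x * h) μH = ENNReal.ofReal ((ΔH h)⁻¹) • μH)
    (ρ : G → ℝ) (hρcont : Continuous ρ) (hρpos : ∀ x, 0 < ρ x)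
    (hρ : ∀ (x : G) (h : H), ρ (x * h) = (ΔH h / ΔG (h : G)) * ρ x)
    [MeasurableSpace (G ⧸ H)] [BorelSpace (G ⧸ H)]
    (μ : Measure (G ⧸ H)) [μ.Regular]
    (hWeil : ∀ f : G → ℂ, Continuous f → HasCompactSupport f →
      ∀ F : G ⧸ H → ℂ, (∀ y : G, F (y : G ⧸ H) = ∫ h : H, f (y * h) ∂μH) →
        ∫ x, f x * (ρ x : ℂ) ∂μG = ∫ p, F p ∂μ)
    (hquasi : ∀ (x : G) (E : Set (G ⧸ H)), MeasurableSet E →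
      ∀ lam : G ⧸ H → ℝ, (∀ y : G, lam (y : G ⧸ H) = ρ (x * y) / ρ y) →
        μ (x • E) = ENNReal.ofReal (∫ p in E, lam p ∂μ)) :
    IsOpen (H : Set G) ↔ 0 < μ {((1 : G) : G ⧸ H)} := by
  -- singletons in the quotient are closed
  have hT1 : ∀ p : G ⧸ H, IsClosed ({p} : Set (G ⧸ H)) := by
    intro p
    obtain ⟨x, rfl⟩ := QuotientGroup.mk_surjective p
    rw [← (QuotientGroup.isQuotientMap_mk H).isClosed_preimage]
    have : ((QuotientGroup.mk : G → G ⧸ H) ⁻¹' {(x : G ⧸ H)})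
        = (fun y => x⁻¹ * y) ⁻¹' (H : Set G) := by
      ext y
      simp only [Set.mem_preimage, Set.mem_singleton_iff, SetLike.mem_coe]
      rw [QuotientGroup.eq]
      constructor
      · intro h; simpa [mul_inv_rev] using H.inv_mem h
      · intro h; simpa [mul_inv_rev] using H.inv_mem h
    rw [this]
    exact hHclosed.preimage (continuous_const.mul continuous_id)
  haveI : T1Space (G ⧸ H) := ⟨hT1⟩
  haveI : MeasurableSingletonClass (G ⧸ H) := ⟨fun p => (hT1 p).measurableSet⟩
  haveI : BorelSpace ↥H := Subtype.borelSpace (H : Set G)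
  have hsing : MeasurableSet ({((1 : G) : G ⧸ H)} : Set (G ⧸ H)) :=
    (hT1 _).measurableSet
  -- preimage of the identity coset is H
  have hpre : ((QuotientGroup.mk : G → G ⧸ H) ⁻¹' {((1 : G) : G ⧸ H)}) = (H : Set G) := by
    ext y
    simp only [Set.mem_preimage, Set.mem_singleton_iff, SetLike.mem_coe]
    rw [QuotientGroup.eq]
    constructor
    · intro h; simpa using H.inv_mem h
    · intro h; simpa using H.inv_mem h
  -- measure of singletons via quasi-invariance
  have hμx : ∀ x : G, μ {((x : G ⧸ H))}
      = ENNReal.ofReal ((μ {((1 : G) : G ⧸ H)}).toReal * (ρ x / ρ 1)) := by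
    intro x
    set lam : G ⧸ H → ℝ := fun p => ρ (x * (Quotient.out p)) / ρ (Quotient.out p) with hlamdef
    have hlam : ∀ y : G, lam ((y : G ⧸ H)) = ρ (x * y) / ρ y := by
      intro y
      obtain ⟨h, hh⟩ := QuotientGroup.mk_out_eq_mul H y
      have hΔne : ΔH h / ΔG (h : G) ≠ 0 :=
        div_ne_zero (hΔHpos h).ne' (hΔGpos _).ne'
      simp only [hlamdef]
      rw [show Quotient.out ((y : G ⧸ H)) = y * h from hh, ← mul_assoc,
        hρ (x * y) h, hρ y h, mul_div_mul_left _ _ hΔne]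
    have hq := hquasi x {((1 : G) : G ⧸ H)} hsing lam hlam
    have hsm : x • ({((1 : G) : G ⧸ H)} : Set (G ⧸ H)) = {((x : G ⧸ H))} := by
      rw [Set.smul_set_singleton]
      congr 1
      show (QuotientGroup.mk (x * 1) : G ⧸ H) = _
      rw [mul_one]
    rw [hsm] at hq
    rw [hq, integral_singleton]
    have h1 : lam ((1 : G) : G ⧸ H) = ρ x / ρ 1 := by
      rw [hlam 1, mul_one]
    rw [h1, smul_eq_mul]
    rfl
  constructor
  · -- open → positive measure
    intro hopen
    obtain ⟨g, hg1, hg0, hgsupp, hgIcc⟩ :=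
      exists_continuous_one_zero_of_isCompact (isCompact_singleton : IsCompact {(1 : G)})
        (hopen.isClosed_compl) (by simp [Set.disjoint_singleton_left, H.one_mem])
    have hg1' : g 1 = 1 := hg1 rfl
    have hgsub : Function.support g ⊆ (H : Set G) := by
      intro z hz
      by_contra hzH
      exact hz (hg0 hzH)
    set cH : ℝ := ∫ h : H, g (h : G) ∂μH with hcHdef
    have hφcont : Continuous fun h : H => g (h : G) :=
      g.continuous.comp continuous_subtype_val
    have hφsupp : HasCompactSupport fun h : H => g (h : G) :=
      hgsupp.comp_isClosedEmbedding hHclosed.isClosedEmbedding_subtypeVal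
    have hcHpos : 0 < cH := by
      rw [hcHdef, integral_pos_iff_support_of_nonneg
        (fun h : ↥H => (hgIcc (h : G)).1) (hφcont.integrable_of_hasCompactSupport hφsupp)]
      refine (hφcont.isOpen_support).measure_pos μH ⟨(1 : H), ?_⟩
      simp [Function.mem_support, hg1']
    -- the Weil formula with `f = g` and `F` the indicator of the identity coset
    set f : G → ℂ := fun x => ((g x : ℝ) : ℂ) with hfdef
    set F : G ⧸ H → ℂ :=
      Set.indicator {((1 : G) : G ⧸ H)} (fun _ => (cH : ℂ)) with hFdef
    have hF : ∀ y : G, F ((y : G ⧸ H)) = ∫ h : H, f (y * h) ∂μH := by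
      intro y
      by_cases hy : y ∈ H
      · have hyq : ((y : G ⧸ H)) = ((1 : G) : G ⧸ H) := by
          rw [QuotientGroup.eq]
          simpa using H.inv_mem hy
        rw [hyq, hFdef,
          Set.indicator_of_mem (Set.mem_singleton (((1 : G) : G ⧸ H))) fun _ => (cH : ℂ)]
        have : ∀ h : H, f (y * (h : G)) = ((g ((((⟨y, hy⟩ : H) * h : H)) : G) : ℝ) : ℂ) := by
          intro h; simp [hfdef]
        simp only [this]
        rw [MeasureTheory.integral_mul_left_eq_self
          (fun h : H => ((g ((h : H) : G) : ℝ) : ℂ)) (⟨y, hy⟩ : H)]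
        exact (integral_ofReal).symm
      · have hyq : ((y : G ⧸ H)) ≠ ((1 : G) : G ⧸ H) := by
          intro hcon
          rw [QuotientGroup.eq] at hcon
          apply hy
          simpa using H.inv_mem hcon
        rw [hFdef, Set.indicator_of_notMem (by simpa using hyq)]
        have : ∀ h : H, f (y * (h : G)) = 0 := by
          intro h
          simp only [hfdef, Complex.ofReal_eq_zero]
          by_contra hne
          have : y * (h : G) ∈ (H : Set G) := hgsub hne
          exact hy (by simpa using H.mul_mem this (H.inv_mem h.2))
        simp [this]
    have hfc : Continuous f := Complex.continuous_ofReal.comp g.continuous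
    have hfs : HasCompactSupport f :=
      show HasCompactSupport ((fun r : ℝ => (r : ℂ)) ∘ ⇑g) from
        hgsupp.comp_left Complex.ofReal_zero
    have hw := hWeil f hfc hfs F hF
    have hRHS : ∫ p, F p ∂μ
        = (μ {((1 : G) : G ⧸ H)}).toReal • (cH : ℂ) := by
      rw [hFdef, integral_indicator_const (cH : ℂ) hsing]
      rfl
    have hLHS : ∫ x, f x * (ρ x : ℂ) ∂μG = ((∫ x, g x * ρ x ∂μG : ℝ) : ℂ) := by
      calc ∫ x, f x * (ρ x : ℂ) ∂μG = ∫ x, ((g x * ρ x : ℝ) : ℂ) ∂μG := by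
            simp [hfdef]
        _ = ((∫ x, g x * ρ x ∂μG : ℝ) : ℂ) := integral_ofReal
    have hA : 0 < ∫ x, g x * ρ x ∂μG := by
      have hcont : Continuous fun x => g x * ρ x := g.continuous.mul hρcont
      have hsupp : HasCompactSupport fun x => g x * ρ x := hgsupp.mul_right
      rw [integral_pos_iff_support_of_nonneg
        (fun x => mul_nonneg (hgIcc x).1 (hρpos x).le)
        (hcont.integrable_of_hasCompactSupport hsupp)]
      refine (hcont.isOpen_support).measure_pos μG ⟨(1 : G), ?_⟩
      simp [Function.mem_support, hg1', (hρpos 1).ne']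
    rw [hLHS, hRHS] at hw
    have hw' : (∫ x, g x * ρ x ∂μG) = (μ {((1 : G) : G ⧸ H)}).toReal * cH := by
      have := hw
      rw [Complex.real_smul] at this
      exact_mod_cast this
    have htpos : 0 < (μ {((1 : G) : G ⧸ H)}).toReal := by
      by_contra hcon
      push_neg at hcon
      have h0 : (μ {((1 : G) : G ⧸ H)}).toReal = 0 :=
        le_antisymm hcon ENNReal.toReal_nonneg
      rw [hw', h0, zero_mul] at hA
      exact lt_irrefl _ hA
    exact ENNReal.toReal_pos_iff.mp htpos |>.1
  · -- positive measure → open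
    intro hpos
    by_contra hHo
    obtain ⟨K, hKc, hKn⟩ := exists_compact_mem_nhds (1 : G)
    set V := interior K with hVdef
    have h1V : (1 : G) ∈ V := mem_interior_iff_mem_nhds.mpr hKn
    obtain ⟨x0, hx0K, hx0min⟩ :=
      hKc.exists_isMinOn ⟨1, interior_subset h1V⟩ hρcont.continuousOn
    have hfin : μ {((1 : G) : G ⧸ H)} ≠ ⊤ :=
      (IsCompact.measure_lt_top isCompact_singleton).ne
    set t : ℝ := (μ {((1 : G) : G ⧸ H)}).toReal with htdef
    have ht : 0 < t := ENNReal.toReal_pos hpos.ne' hfin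
    set c : ENNReal := ENNReal.ofReal (t * (ρ x0 / ρ 1)) with hcdef
    have hc0 : c ≠ 0 := by
      rw [hcdef]
      simp only [ne_eq, ENNReal.ofReal_eq_zero, not_le]
      exact mul_pos ht (div_pos (hρpos x0) (hρpos 1))
    have hcT : c ≠ ⊤ := ENNReal.ofReal_ne_top
    -- the image of V in the quotient is infinite
    set S : Set (G ⧸ H) := (QuotientGroup.mk : G → G ⧸ H) '' V with hSdef
    have hSinf : S.Infinite := by
      intro hSfin
      have hq1S : ((1 : G) : G ⧸ H) ∈ S := ⟨1, h1V, rfl⟩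
      have hSopen : IsOpen S := QuotientGroup.isOpenMap_coe V isOpen_interior
      have hrest : IsClosed (S \ {((1 : G) : G ⧸ H)}) :=
        (hSfin.subset Set.diff_subset).isClosed
      have hopen1 : IsOpen ({((1 : G) : G ⧸ H)} : Set (G ⧸ H)) := by
        have : ({((1 : G) : G ⧸ H)} : Set (G ⧸ H))
            = S ∩ (S \ {((1 : G) : G ⧸ H)})ᶜ := by
          ext p
          by_cases hp : p ∈ S <;> by_cases hp1 : p = ((1 : G) : G ⧸ H) <;>
            simp [hp, hp1, hq1S]
        rw [this]
        exact hSopen.inter hrest.isOpen_compl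
      apply hHo
      rw [← hpre]
      exact hopen1.preimage QuotientGroup.continuous_mk
    -- derive a contradiction from finiteness of μ on compacts
    set M : ENNReal := μ ((QuotientGroup.mk : G → G ⧸ H) '' K) with hMdef
    have hMfin : M ≠ ⊤ :=
      ((hKc.image QuotientGroup.continuous_mk).measure_lt_top).ne
    obtain ⟨n, hn⟩ := ENNReal.exists_nat_gt (ENNReal.div_lt_top hMfin hc0).ne
    obtain ⟨T, hTS, hTcard⟩ := hSinf.exists_subset_card_eq n
    have hkey : ∀ p ∈ T, c ≤ μ {p} := by
      intro p hp
      obtain ⟨x, hxV, rfl⟩ := hTS hp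
      rw [hμx x, hcdef]
      apply ENNReal.ofReal_le_ofReal
      have hx0x : ρ x0 ≤ ρ x := hx0min (interior_subset hxV)
      exact mul_le_mul_of_nonneg_left
        (div_le_div_of_nonneg_right hx0x (hρpos 1).le) ht.le
    have hU : (⋃ p ∈ T, ({p} : Set (G ⧸ H))) = (↑T : Set (G ⧸ H)) := by
      ext q; simp
    have hdisj : ((↑T : Set (G ⧸ H))).PairwiseDisjoint
        (fun p => ({p} : Set (G ⧸ H))) := by
      intro a _ b _ hab
      simp [Function.onFun, Set.disjoint_singleton_left, hab]
    have hTmeas : μ (↑T : Set (G ⧸ H)) = ∑ p ∈ T, μ {p} := by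
      rw [← hU, measure_biUnion_finset hdisj (fun p _ => (hT1 p).measurableSet)]
    have hsum : (n : ENNReal) * c ≤ μ (↑T : Set (G ⧸ H)) := by
      rw [hTmeas]
      calc (n : ENNReal) * c = ∑ _p ∈ T, c := by
            rw [Finset.sum_const, hTcard, nsmul_eq_mul]
        _ ≤ ∑ p ∈ T, μ {p} := Finset.sum_le_sum hkey
    have hTM : μ (↑T : Set (G ⧸ H)) ≤ M := by
      apply measure_mono
      intro p hp
      obtain ⟨x, hxV, rfl⟩ := hTS hp
      exact ⟨x, interior_subset hxV, rfl⟩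
    have hMlt : M < (n : ENNReal) * c :=
      (ENNReal.div_lt_iff (Or.inl hc0) (Or.inl hcT)).mp hn
    exact absurd (hMlt.trans_le (hsum.trans hTM)) (lt_irrefl M)
end

section
/- Let Γ be a countable group and let μ be the Bernoulli(1/2) product probability measure on X = Γ → Bool, with X given the product topology (so X is a compact metrizable space and μ is a Borel probability measure). For γ ∈ Γ let s_γ : X → X be the shift (s_γ x)(δ) = x(γ⁻¹ δ). Then for every Borel set E ⊆ X with μ(E) > 0, there exists a finite set F ⊆ Γ such that for every γ ∈ Γ with (γ • F) ∩ F = ∅ (where γ • F = {γδ : δ ∈ F}), one has μ(s_γ⁻¹(E) ∩ E) > 0. -/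
open MeasureTheory
open scoped ENNReal symmDiff

namespace Stmt15Aux

attribute [local instance] Classical.propDecidable

variable {Γ : Type*} [Group Γ]

/-- The basic cylinder set. -/
def cyl (F : Finset Γ) (t : Γ → Bool) : Set (Γ → Bool) := {x | ∀ δ ∈ F, x δ = t δ}

lemma measurableSet_cyl (F : Finset Γ) (t : Γ → Bool) : MeasurableSet (cyl F t) := by
  have : cyl F t = ⋂ δ ∈ F, (fun x : Γ → Bool => x δ) ⁻¹' {t δ} := by
    ext x; simp [cyl]
  rw [this]
  exact MeasurableSet.biInter F.countable_toSet fun δ _ =>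
    (measurable_pi_apply δ) (measurableSet_singleton _)

/-- `S` depends only on coordinates in `F`. -/
def depOn (S : Set (Γ → Bool)) (F : Finset Γ) : Prop :=
  ∀ x y : Γ → Bool, (∀ δ ∈ F, x δ = y δ) → (x ∈ S ↔ y ∈ S)

/-- extension of a function on `F` by `false`. -/
noncomputable def extend (F : Finset Γ) (u : {δ // δ ∈ F} → Bool) : Γ → Bool :=
  fun δ => if h : δ ∈ F then u ⟨δ, h⟩ else false

lemma extend_eq_on {F : Finset Γ} (x : Γ → Bool) {δ : Γ} (h : δ ∈ F) :
    extend F (fun i => x i) δ = x δ := by simp [extend, h]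

/-- The finite set of "patterns" of `S` on `F`. -/
noncomputable def pats (F : Finset Γ) (S : Set (Γ → Bool)) : Finset (Γ → Bool) :=
  (Finset.univ.filter (fun u : {δ // δ ∈ F} → Bool => extend F u ∈ S)).image (extend F)

lemma mem_pats {F : Finset Γ} {S : Set (Γ → Bool)} {t : Γ → Bool} :
    t ∈ pats F S ↔ ∃ u, extend F u ∈ S ∧ extend F u = t := by
  simp [pats]

lemma pats_subset {F : Finset Γ} {S : Set (Γ → Bool)} {t : Γ → Bool}
    (ht : t ∈ pats F S) : t ∈ S := by
  rcases mem_pats.1 ht with ⟨u, hu, rfl⟩; exact hu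

lemma pats_ext {F : Finset Γ} {S : Set (Γ → Bool)} {t t' : Γ → Bool}
    (ht : t ∈ pats F S) (ht' : t' ∈ pats F S) (h : ∀ δ ∈ F, t δ = t' δ) : t = t' := by
  rcases mem_pats.1 ht with ⟨u, -, rfl⟩
  rcases mem_pats.1 ht' with ⟨u', -, rfl⟩
  funext δ
  by_cases hδ : δ ∈ F
  · exact h δ hδ
  · simp [extend, hδ]

lemma decomp {S : Set (Γ → Bool)} {F : Finset Γ} (h : depOn S F) :
    S = ⋃ t ∈ pats F S, cyl F t := by
  ext x
  constructor
  · intro hx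
    have hagree : ∀ δ ∈ F, extend F (fun i => x i) δ = x δ := fun δ hδ => extend_eq_on x hδ
    have hmem : extend F (fun i => x i) ∈ S := (h _ x hagree).2 hx
    refine Set.mem_biUnion (mem_pats.2 ⟨_, hmem, rfl⟩) ?_
    intro δ hδ; exact (hagree δ hδ).symm
  · intro hx
    rcases Set.mem_iUnion₂.1 hx with ⟨t, ht, hxt⟩
    exact (h x t hxt).2 (pats_subset ht)

lemma measurableSet_of_depOn {S : Set (Γ → Bool)} {F : Finset Γ} (h : depOn S F) :
    MeasurableSet S := by
  rw [decomp h]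
  exact (pats F S).measurableSet_biUnion fun t _ => measurableSet_cyl F t

/-- members of a common cylinder family agree. -/
lemma cyl_agree {F : Finset Γ} {t t' x : Γ → Bool} (h : x ∈ cyl F t) (h' : x ∈ cyl F t') :
    ∀ δ ∈ F, t δ = t' δ := fun δ hδ => (h δ hδ).symm.trans (h' δ hδ)

lemma biUnion_measure {X β : Type*} [MeasurableSpace X] (ν : Measure X) (T : Finset β)
    (f : β → Set X) (hm : ∀ b ∈ T, MeasurableSet (f b))
    (hd : (↑T : Set β).PairwiseDisjoint f) {c : ℝ≥0∞} (hc : ∀ b ∈ T, ν (f b) = c) :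
    ν (⋃ b ∈ T, f b) = T.card * c := by
  rw [measure_biUnion_finset hd hm, Finset.sum_congr rfl hc, Finset.sum_const, nsmul_eq_mul]

/-- measure of a set depending on finitely many coordinates, for any measure with the
Bernoulli(1/2) cylinder values. -/
lemma meas_of_depOn (ν : Measure (Γ → Bool))
    (hν : ∀ (F₀ : Finset Γ) (t : Γ → Bool), ν (cyl F₀ t) = (1 / 2 : ℝ≥0∞) ^ F₀.card)
    {S : Set (Γ → Bool)} {F : Finset Γ} (h : depOn S F) :
    ν S = (pats F S).card * (1 / 2 : ℝ≥0∞) ^ F.card := by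
  have hres := biUnion_measure ν (pats F S) (cyl F) (fun t _ => measurableSet_cyl F t) ?_ (fun t _ => hν F t)
  · rw [← decomp h] at hres; exact hres
  intro t ht t' ht' hne
  rw [Function.onFun, Set.disjoint_left]
  intro x hx hx'
  exact hne (pats_ext ht ht' (cyl_agree hx hx'))

/-- the algebra of sets depending on finitely many coordinates. -/
def 𝒜 (Γ : Type*) [Group Γ] : Set (Set (Γ → Bool)) := {S | ∃ F : Finset Γ, depOn S F}

lemma isSetAlgebra : IsSetAlgebra (𝒜 Γ) where
  empty_mem := ⟨∅, fun _ _ _ => Iff.rfl⟩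
  compl_mem := by
    rintro S ⟨F, hF⟩
    exact ⟨F, fun x y hxy => not_congr (hF x y hxy)⟩
  union_mem := by
    rintro S T ⟨F, hF⟩ ⟨G, hG⟩
    refine ⟨F ∪ G, fun x y hxy => ?_⟩
    exact or_congr (hF x y fun δ hδ => hxy δ (Finset.mem_union_left _ hδ))
      (hG x y fun δ hδ => hxy δ (Finset.mem_union_right _ hδ))

lemma isPiSystem : IsPiSystem (𝒜 Γ) := by
  rintro S ⟨F, hF⟩ T ⟨G, hG⟩ -
  refine ⟨F ∪ G, fun x y hxy => ?_⟩
  exact and_congr (hF x y fun δ hδ => hxy δ (Finset.mem_union_left _ hδ))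
    (hG x y fun δ hδ => hxy δ (Finset.mem_union_right _ hδ))

lemma gen_eq : (MeasurableSpace.pi : MeasurableSpace (Γ → Bool)) =
    MeasurableSpace.generateFrom (𝒜 Γ) := by
  refine le_antisymm (iSup_le fun δ => ?_) (MeasurableSpace.generateFrom_le ?_)
  · rintro S ⟨s, -, rfl⟩
    refine MeasurableSpace.measurableSet_generateFrom ⟨{δ}, fun x y hxy => ?_⟩
    have : x δ = y δ := hxy δ (Finset.mem_singleton_self δ)
    simp [Set.mem_preimage, this]
  · rintro S ⟨F, hF⟩
    exact measurableSet_of_depOn hF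

/-- preimage of a cylinder under the shift. -/
lemma shift_preimage_cyl (γ : Γ) (F : Finset Γ) (t : Γ → Bool) :
    (fun x : Γ → Bool => fun δ => x (γ⁻¹ * δ)) ⁻¹' cyl F t
      = cyl (F.image (fun d => γ⁻¹ * d)) (fun δ => t (γ * δ)) := by
  ext x
  simp only [cyl, Set.mem_preimage, Set.mem_setOf_eq, Finset.mem_image]
  constructor
  · rintro h δ ⟨d, hd, rfl⟩
    rw [h d hd]
    congr 1
    group
  · intro h δ hδ
    have := h (γ⁻¹ * δ) ⟨δ, hδ, rfl⟩
    rwa [show γ * (γ⁻¹ * δ) = δ by group] at this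

lemma measurable_shift (γ : Γ) :
    Measurable (fun x : Γ → Bool => fun δ => x (γ⁻¹ * δ)) :=
  measurable_pi_lambda _ fun δ => measurable_pi_apply (γ⁻¹ * δ)

end Stmt15Aux

open Stmt15Aux

/-- **Statement 15.** Let `Γ` be a countable group and `μ` the Bernoulli(1/2) product
probability measure on `X = Γ → Bool` (characterized by its values on cylinder sets). For
`γ ∈ Γ` let `s_γ : X → X` be the shift `(s_γ x)(δ) = x(γ⁻¹ δ)`. Then for every measurable
`E ⊆ X` with `μ(E) > 0` there exists a finite set `F ⊆ Γ` such that for every `γ ∈ Γ` with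
`(γ • F) ∩ F = ∅` one has `μ(s_γ⁻¹(E) ∩ E) > 0`. -/
theorem stmt15 {Γ : Type*} [Group Γ] [Countable Γ]
    (μ : Measure (Γ → Bool)) [IsProbabilityMeasure μ]
    (hμ : ∀ (F₀ : Finset Γ) (t : Γ → Bool),
      μ {x | ∀ δ ∈ F₀, x δ = t δ} = (1 / 2 : ℝ≥0∞) ^ F₀.card)
    (E : Set (Γ → Bool)) (hE : MeasurableSet E) (hEpos : 0 < μ E) :
    ∃ F : Finset Γ, ∀ γ : Γ,
      Disjoint ((fun δ => γ * δ) '' (F : Set Γ)) (F : Set Γ) →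
      0 < μ ((fun x : Γ → Bool => fun δ => x (γ⁻¹ * δ)) ⁻¹' E ∩ E) := by
  classical
  have hμ' : ∀ (F₀ : Finset Γ) (t : Γ → Bool), μ (cyl F₀ t) = (1 / 2 : ℝ≥0∞) ^ F₀.card := hμ
  -- the shift maps
  set sh : Γ → (Γ → Bool) → (Γ → Bool) := fun γ x δ => x (γ⁻¹ * δ) with hsh
  -- the pushforward of μ by any shift also satisfies the cylinder property
  have hmap : ∀ γ : Γ, ∀ (F₀ : Finset Γ) (t : Γ → Bool),
      (μ.map (sh γ)) (cyl F₀ t) = (1 / 2 : ℝ≥0∞) ^ F₀.card := by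
    intro γ F₀ t
    rw [Measure.map_apply (measurable_shift γ) (measurableSet_cyl F₀ t)]
    rw [show sh γ ⁻¹' cyl F₀ t = _ from shift_preimage_cyl γ F₀ t, hμ']
    rw [Finset.card_image_of_injective _ (mul_right_injective γ⁻¹)]
  -- shift invariance of μ
  have hinv : ∀ γ : Γ, μ.map (sh γ) = μ := by
    intro γ
    have : IsProbabilityMeasure (μ.map (sh γ)) :=
      Measure.isProbabilityMeasure_map (measurable_shift γ).aemeasurable
    refine ext_of_generate_finite (𝒜 Γ) gen_eq isPiSystem ?_ (by simp)
    rintro S ⟨F, hF⟩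
    rw [meas_of_depOn _ (hmap γ) hF, meas_of_depOn _ hμ' hF]
  -- measure-dense approximation
  have hdense : μ.MeasureDense (𝒜 Γ) :=
    Measure.MeasureDense.of_generateFrom_isSetAlgebra_finite μ isSetAlgebra gen_eq
  have hm_ne_top : μ E ≠ ∞ := measure_ne_top μ E
  have hmR_pos : 0 < (μ E).toReal := ENNReal.toReal_pos hEpos.ne' hm_ne_top
  set ε : ℝ := (μ E).toReal ^ 2 / 8 with hε_def
  have hε_pos : 0 < ε := by positivity
  obtain ⟨C, ⟨F, hF⟩, hEC⟩ := hdense.approx E hE hm_ne_top ε hε_pos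
  refine ⟨F, fun γ hγ => ?_⟩
  have hCmeas : MeasurableSet C := measurableSet_of_depOn hF
  -- disjointness of coordinate sets
  set F' : Finset Γ := F.image (fun d => γ⁻¹ * d) with hF'
  have hFF' : ∀ δ ∈ F', δ ∉ F := by
    intro δ hδ hδF
    rcases Finset.mem_image.1 hδ with ⟨d, hd, rfl⟩
    have h1 : γ * (γ⁻¹ * d) ∈ (fun δ => γ * δ) '' (F : Set Γ) :=
      ⟨γ⁻¹ * d, hδF, rfl⟩
    rw [show γ * (γ⁻¹ * d) = d by group] at h1
    exact Set.disjoint_left.1 hγ h1 hd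
  -- the key product computation
  set T : Finset (Γ → Bool) := pats F C with hT
  have hCdecomp : C = ⋃ t ∈ T, cyl F t := decomp hF
  have hTdisj : ∀ t ∈ T, ∀ t' ∈ T, t ≠ t' → Disjoint (cyl F t) (cyl F t') := by
    intro t ht t' ht' hne
    rw [Set.disjoint_left]
    intro x hx hx'
    exact hne (pats_ext ht ht' (cyl_agree hx hx'))
  have hpre : sh γ ⁻¹' C = ⋃ t ∈ T, cyl F' (fun δ => t (γ * δ)) := by
    rw [hCdecomp, Set.preimage_iUnion₂]
    refine Set.iUnion₂_congr fun t _ => shift_preimage_cyl γ F t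
  have hcardF' : F'.card = F.card := Finset.card_image_of_injective _ (mul_right_injective γ⁻¹)
  have hdisjFF' : Disjoint F' F := Finset.disjoint_left.2 hFF'
  -- measure of an intersection of one cylinder on F' with one on F
  have hinter : ∀ a b : Γ → Bool, μ (cyl F' a ∩ cyl F b)
      = (1 / 2 : ℝ≥0∞) ^ F.card * (1 / 2 : ℝ≥0∞) ^ F.card := by
    intro a b
    have : cyl F' a ∩ cyl F b = cyl (F' ∪ F) (fun δ => if δ ∈ F' then a δ else b δ) := by
      ext x
      simp only [cyl, Set.mem_inter_iff, Set.mem_setOf_eq, Finset.mem_union]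
      constructor
      · rintro ⟨h1, h2⟩ δ hδ
        rcases hδ with hδ | hδ
        · rw [if_pos hδ]; exact h1 δ hδ
        · rw [if_neg (fun h => hFF' δ h hδ)]; exact h2 δ hδ
      · intro h
        constructor
        · intro δ hδ; have h0 := h δ (Or.inl hδ); rwa [if_pos hδ] at h0
        · intro δ hδ; have h0 := h δ (Or.inr hδ)
          rwa [if_neg (fun h' => hFF' δ h' hδ)] at h0
    rw [this, hμ', Finset.card_union_of_disjoint hdisjFF', hcardF', pow_add]
  -- μ (sh γ ⁻¹' C ∩ C) = μ C * μ C
  have hmuC : μ C = T.card * (1 / 2 : ℝ≥0∞) ^ F.card := meas_of_depOn μ hμ' hF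
  have hkey : μ (sh γ ⁻¹' C ∩ C)
      = (T.card * (1 / 2 : ℝ≥0∞) ^ F.card) * (T.card * (1 / 2 : ℝ≥0∞) ^ F.card) := by
    have hstep : ∀ t : Γ → Bool, μ (cyl F' (fun δ => t (γ * δ)) ∩ C)
        = T.card * ((1 / 2 : ℝ≥0∞) ^ F.card * (1 / 2 : ℝ≥0∞) ^ F.card) := by
      intro t
      have : cyl F' (fun δ => t (γ * δ)) ∩ C
          = ⋃ u ∈ T, (cyl F' (fun δ => t (γ * δ)) ∩ cyl F u) := by
        rw [hCdecomp, Set.inter_iUnion₂]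
      rw [this]
      refine biUnion_measure μ _ _
        (fun u _ => ((measurableSet_cyl _ _).inter (measurableSet_cyl _ _))) ?_
        (fun u hu => hinter _ u)
      intro u hu u' hu' hne
      exact (Set.disjoint_right.2 fun x hx => Set.disjoint_right.1
        ((hTdisj u hu u' hu' hne).mono Set.inter_subset_right Set.inter_subset_right) hx)
    rw [hpre, Set.iUnion₂_inter]
    have := biUnion_measure μ T (fun t => cyl F' (fun δ => t (γ * δ)) ∩ C)
      (fun t _ => (measurableSet_cyl _ _).inter hCmeas) ?_ (fun t ht => hstep t)
    · rw [this]; ring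
    · intro t ht t' ht' hne
      have hdisj : Disjoint (cyl F' (fun δ => t (γ * δ))) (cyl F' (fun δ => t' (γ * δ))) := by
        rw [Set.disjoint_left]
        intro x hx hx'
        refine hne (pats_ext ht ht' fun d hd => ?_)
        have hmem : γ⁻¹ * d ∈ F' := Finset.mem_image.2 ⟨d, hd, rfl⟩
        have h1 : x (γ⁻¹ * d) = t (γ * (γ⁻¹ * d)) := hx _ hmem
        have h2 : x (γ⁻¹ * d) = t' (γ * (γ⁻¹ * d)) := hx' _ hmem
        rw [show γ * (γ⁻¹ * d) = d by group] at h1 h2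
        rw [← h1, h2]
      exact hdisj.mono Set.inter_subset_left Set.inter_subset_left
  -- shift invariance on the symmetric difference
  have hsymm_meas : MeasurableSet (E ∆ C) := hE.symmDiff hCmeas
  have hinv' : μ (sh γ ⁻¹' (E ∆ C)) = μ (E ∆ C) := by
    rw [← Measure.map_apply (measurable_shift γ) hsymm_meas, hinv γ]
  -- main inclusion
  have hincl : sh γ ⁻¹' C ∩ C ⊆ (sh γ ⁻¹' E ∩ E) ∪ (sh γ ⁻¹' (E ∆ C) ∪ (E ∆ C)) := by
    intro x ⟨hx1, hx2⟩
    by_cases hxE : x ∈ E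
    · by_cases hxE' : sh γ x ∈ E
      · exact Or.inl ⟨hxE', hxE⟩
      · exact Or.inr (Or.inl (Set.mem_symmDiff.2 (Or.inr ⟨hx1, hxE'⟩)))
    · exact Or.inr (Or.inr (Set.mem_symmDiff.2 (Or.inr ⟨hx2, hxE⟩)))
  have hbound : μ (sh γ ⁻¹' C ∩ C)
      ≤ μ (sh γ ⁻¹' E ∩ E) + (μ (E ∆ C) + μ (E ∆ C)) := by
    calc μ (sh γ ⁻¹' C ∩ C) ≤ μ ((sh γ ⁻¹' E ∩ E) ∪ (sh γ ⁻¹' (E ∆ C) ∪ (E ∆ C))) :=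
          measure_mono hincl
      _ ≤ μ (sh γ ⁻¹' E ∩ E) + μ (sh γ ⁻¹' (E ∆ C) ∪ (E ∆ C)) := measure_union_le _ _
      _ ≤ μ (sh γ ⁻¹' E ∩ E) + (μ (sh γ ⁻¹' (E ∆ C)) + μ (E ∆ C)) := by
          gcongr; exact measure_union_le _ _
      _ = μ (sh γ ⁻¹' E ∩ E) + (μ (E ∆ C) + μ (E ∆ C)) := by rw [hinv']
  -- lower bound on μ C
  have hC_lower : μ E ≤ μ C + μ (E ∆ C) := by
    calc μ E ≤ μ (C ∪ E ∆ C) := by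
          refine measure_mono fun x hx => ?_
          by_cases hxC : x ∈ C
          · exact Or.inl hxC
          · exact Or.inr (Set.mem_symmDiff.2 (Or.inl ⟨hx, hxC⟩))
      _ ≤ μ C + μ (E ∆ C) := measure_union_le _ _
  -- pass to real numbers
  set t := μ (sh γ ⁻¹' E ∩ E) with ht_def
  have ht_ne : t ≠ ∞ := measure_ne_top μ _
  have haC_ne : μ C ≠ ∞ := measure_ne_top μ _
  have hd_ne : μ (E ∆ C) ≠ ∞ := measure_ne_top μ _
  set mR := (μ E).toReal
  set aR := (μ C).toReal
  set dR := (μ (E ∆ C)).toReal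
  have hdR_lt : dR < ε := by
    have := hEC
    exact (ENNReal.lt_ofReal_iff_toReal_lt hd_ne).1 this
  have h1R : mR ≤ aR + dR := by
    have := hC_lower
    calc mR ≤ ((μ C + μ (E ∆ C))).toReal :=
          ENNReal.toReal_mono (by finiteness) this
      _ = aR + dR := ENNReal.toReal_add haC_ne hd_ne
  have h2R : aR * aR ≤ t.toReal + (dR + dR) := by
    have h := hbound
    rw [hkey, ← hmuC] at h
    calc aR * aR = (μ C * μ C).toReal := (ENNReal.toReal_mul).symm
      _ ≤ (t + (μ (E ∆ C) + μ (E ∆ C))).toReal := ENNReal.toReal_mono (by finiteness) h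
      _ = t.toReal + (dR + dR) := by
          rw [ENNReal.toReal_add ht_ne (by finiteness), ENNReal.toReal_add hd_ne hd_ne]
  have hm1 : mR ≤ 1 := by
    have := (prob_le_one (μ := μ) (s := E))
    calc mR ≤ (1 : ℝ≥0∞).toReal := ENNReal.toReal_mono (by simp) this
      _ = 1 := by simp
  have haR0 : 0 ≤ aR := ENNReal.toReal_nonneg
  have hdR0 : 0 ≤ dR := ENNReal.toReal_nonneg
  have htR : 0 < t.toReal := by
    nlinarith [sq_nonneg (aR - 7 * mR / 8), sq_nonneg mR, hε_def]
  exact (ENNReal.toReal_pos_iff.1 htR).1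
end

section
/- Let Γ be a countable subgroup of the multiplicative group ℝ_{>0} that is dense in ℝ_{>0}, and let μ be the Bernoulli(1/2) product probability measure on X = Γ → Bool. For γ ∈ Γ let s_γ : X → X be the shift (s_γ x)(δ) = x(γ⁻¹ δ). Then for every Borel set E ⊆ X with μ(E) > 0 and every real number r > 0, r belongs to the closure in ℝ of the set {γ ∈ Γ : μ(s_γ⁻¹(E) ∩ E) > 0}. -/
open MeasureTheory
open scoped ENNReal

open Set
open scoped symmDiff

variable {ι : Type*} (μ : Measure (ι → Bool))

theorem cylSingle (hμ : ∀ (F₀ : Finset ι) (t : ι → Bool),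
      μ {x | ∀ δ ∈ F₀, x δ = t δ} = (1 / 2 : ℝ≥0∞) ^ F₀.card)
    (s : Finset ι) (t : ∀ i : s, Bool) :
    μ (cylinder s ({t} : Set (∀ i : s, Bool)) : Set (ι → Bool)) = (1 / 2 : ℝ≥0∞) ^ s.card := by
  classical
  have h : (cylinder s ({t} : Set (∀ i : s, Bool)) : Set (ι → Bool))
      = {x | ∀ δ ∈ s, x δ = if h : δ ∈ s then t ⟨δ, h⟩ else false} := by
    ext x
    simp only [mem_cylinder, Set.mem_singleton_iff, funext_iff, Set.mem_setOf_eq]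
    constructor
    · intro h δ hδ; simp only [hδ, dif_pos]; exact h ⟨δ, hδ⟩
    · intro h δ; simpa [δ.2] using h δ.1 δ.2
  rw [h, hμ]

theorem cylMeasure (hμ : ∀ (F₀ : Finset ι) (t : ι → Bool),
      μ {x | ∀ δ ∈ F₀, x δ = t δ} = (1 / 2 : ℝ≥0∞) ^ F₀.card)
    (s : Finset ι) (S : Set (∀ i : s, Bool)) :
    μ (cylinder s S : Set (ι → Bool)) = S.ncard * (1 / 2 : ℝ≥0∞) ^ s.card := by
  classical
  have hfin : S.Finite := S.toFinite
  have hdecomp : (cylinder s S : Set (ι → Bool))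
      = ⋃ t ∈ hfin.toFinset, (cylinder s ({t} : Set (∀ i : s, Bool)) : Set (ι → Bool)) := by
    ext x; simp [mem_cylinder]
  rw [hdecomp, measure_biUnion_finset ?_ (fun t _ => MeasurableSet.cylinder s (measurableSet_singleton t))]
  · rw [Finset.sum_congr rfl fun t _ => cylSingle μ hμ s t, Finset.sum_const,
      nsmul_eq_mul, Set.ncard_eq_toFinset_card S hfin]
  · intro a _ b _ hab
    rw [Function.onFun, Set.disjoint_left]
    intro x hxa hxb
    exact hab (by rw [← (mem_cylinder s ({a} : Set (∀ i : s, Bool)) x).1 hxa,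
      ← (mem_cylinder s ({b} : Set (∀ i : s, Bool)) x).1 hxb])

theorem cylSingleSingle (hμ : ∀ (F₀ : Finset ι) (t : ι → Bool),
      μ {x | ∀ δ ∈ F₀, x δ = t δ} = (1 / 2 : ℝ≥0∞) ^ F₀.card)
    (s₁ s₂ : Finset ι) (hd : Disjoint s₁ s₂) (t₁ : ∀ i : s₁, Bool) (t₂ : ∀ i : s₂, Bool) :
    μ ((cylinder s₁ ({t₁} : Set (∀ i : s₁, Bool)) : Set (ι → Bool))
        ∩ (cylinder s₂ ({t₂} : Set (∀ i : s₂, Bool)) : Set (ι → Bool)))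
      = (1 / 2 : ℝ≥0∞) ^ s₁.card * (1 / 2 : ℝ≥0∞) ^ s₂.card := by
  classical
  have h : (cylinder s₁ ({t₁} : Set (∀ i : s₁, Bool)) : Set (ι → Bool))
        ∩ (cylinder s₂ ({t₂} : Set (∀ i : s₂, Bool)) : Set (ι → Bool))
      = {x | ∀ δ ∈ s₁ ∪ s₂, x δ = if h : δ ∈ s₁ then t₁ ⟨δ, h⟩
          else if h : δ ∈ s₂ then t₂ ⟨δ, h⟩ else false} := by
    ext x
    simp only [Set.mem_inter_iff, mem_cylinder, Set.mem_singleton_iff, funext_iff,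
      Set.mem_setOf_eq]
    constructor
    · rintro ⟨h1, h2⟩ δ hδ
      by_cases hδ1 : δ ∈ s₁
      · simp only [hδ1, dif_pos]; exact h1 ⟨δ, hδ1⟩
      · have hδ2 : δ ∈ s₂ := (Finset.mem_union.1 hδ).resolve_left hδ1
        simp only [hδ1, dif_neg, not_false_iff, hδ2, dif_pos]; exact h2 ⟨δ, hδ2⟩
    · intro h
      refine ⟨fun δ => ?_, fun δ => ?_⟩
      · simpa [δ.2] using h δ.1 (Finset.mem_union_left _ δ.2)
      · have hδ1 : δ.1 ∉ s₁ := Finset.disjoint_right.1 hd δ.2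
        simpa [hδ1, δ.2] using h δ.1 (Finset.mem_union_right _ δ.2)
  rw [h, hμ, Finset.card_union_of_disjoint hd, pow_add]

theorem cylInter (hμ : ∀ (F₀ : Finset ι) (t : ι → Bool),
      μ {x | ∀ δ ∈ F₀, x δ = t δ} = (1 / 2 : ℝ≥0∞) ^ F₀.card)
    (s₁ s₂ : Finset ι) (hd : Disjoint s₁ s₂)
    (S₁ : Set (∀ i : s₁, Bool)) (S₂ : Set (∀ i : s₂, Bool)) :
    μ ((cylinder s₁ S₁ : Set (ι → Bool)) ∩ (cylinder s₂ S₂ : Set (ι → Bool)))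
      = μ (cylinder s₁ S₁ : Set (ι → Bool)) * μ (cylinder s₂ S₂ : Set (ι → Bool)) := by
  classical
  have key1 : ∀ t₁ : ∀ i : s₁, Bool,
      μ ((cylinder s₁ ({t₁} : Set (∀ i : s₁, Bool)) : Set (ι → Bool))
        ∩ (cylinder s₂ S₂ : Set (ι → Bool)))
      = (1 / 2 : ℝ≥0∞) ^ s₁.card * (S₂.ncard * (1 / 2 : ℝ≥0∞) ^ s₂.card) := by
    intro t₁
    have hdecomp : (cylinder s₁ ({t₁} : Set (∀ i : s₁, Bool)) : Set (ι → Bool))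
        ∩ (cylinder s₂ S₂ : Set (ι → Bool))
        = ⋃ t₂ ∈ S₂.toFinite.toFinset,
          ((cylinder s₁ ({t₁} : Set (∀ i : s₁, Bool)) : Set (ι → Bool))
            ∩ (cylinder s₂ ({t₂} : Set (∀ i : s₂, Bool)) : Set (ι → Bool))) := by
      ext x; simp [mem_cylinder]
    rw [hdecomp, measure_biUnion_finset ?_ (fun t _ =>
      ((MeasurableSet.cylinder s₁ (measurableSet_singleton t₁)).inter
        (MeasurableSet.cylinder s₂ (measurableSet_singleton t))))]
    · rw [Finset.sum_congr rfl fun t _ => cylSingleSingle μ hμ s₁ s₂ hd t₁ t,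
        Finset.sum_const, nsmul_eq_mul, Set.ncard_eq_toFinset_card S₂ S₂.toFinite]
      ring
    · intro a _ b _ hab
      rw [Function.onFun, Set.disjoint_left]
      intro x hxa hxb
      exact hab (by rw [← (mem_cylinder s₂ ({a} : Set (∀ i : s₂, Bool)) x).1 hxa.2,
        ← (mem_cylinder s₂ ({b} : Set (∀ i : s₂, Bool)) x).1 hxb.2])
  have hdecomp : (cylinder s₁ S₁ : Set (ι → Bool)) ∩ (cylinder s₂ S₂ : Set (ι → Bool))
      = ⋃ t₁ ∈ S₁.toFinite.toFinset,
        ((cylinder s₁ ({t₁} : Set (∀ i : s₁, Bool)) : Set (ι → Bool))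
          ∩ (cylinder s₂ S₂ : Set (ι → Bool))) := by
    ext x; simp [mem_cylinder]
  rw [hdecomp, measure_biUnion_finset ?_ (fun t _ =>
      ((MeasurableSet.cylinder s₁ (measurableSet_singleton t)).inter
        (MeasurableSet.cylinder s₂ ?_)))]
  · rw [Finset.sum_congr rfl fun t _ => key1 t, Finset.sum_const, nsmul_eq_mul,
      cylMeasure μ hμ, cylMeasure μ hμ, Set.ncard_eq_toFinset_card S₁ S₁.toFinite]
    ring
  · intro a _ b _ hab
    rw [Function.onFun, Set.disjoint_left]
    intro x hxa hxb
    exact hab (by rw [← (mem_cylinder s₁ ({a} : Set (∀ i : s₁, Bool)) x).1 hxa.1,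
      ← (mem_cylinder s₁ ({b} : Set (∀ i : s₁, Bool)) x).1 hxb.1])
  · exact (Set.toFinite S₂).measurableSet

section Shift
variable {G : Type*} [Group G] [DecidableEq G]

/-- The relabeling equivalence between `s` and `s.image (γ⁻¹ * ·)`. -/
def shiftEquiv (γ : G) (s : Finset G) : {x // x ∈ s} ≃ {x // x ∈ s.image fun δ => γ⁻¹ * δ} where
  toFun i := ⟨γ⁻¹ * i, Finset.mem_image_of_mem _ i.2⟩
  invFun j := ⟨γ * j, by
    obtain ⟨δ, hδ, h⟩ := Finset.mem_image.1 j.2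
    have : γ * (j : G) = δ := by rw [← h]; group
    rwa [this]⟩
  left_inv i := by ext; group
  right_inv j := by ext; group

theorem shiftPreimageCyl (γ : G) (s : Finset G) (S : Set (∀ i : s, Bool)) :
    (fun (x : G → Bool) δ => x (γ⁻¹ * δ)) ⁻¹' (cylinder s S : Set (G → Bool))
      = (cylinder (s.image fun δ => γ⁻¹ * δ)
          ((fun (f : ∀ _ : {x // x ∈ s.image fun δ => γ⁻¹ * δ}, Bool) (i : s) =>
            f (shiftEquiv γ s i)) ⁻¹' S) : Set (G → Bool)) := by
  ext x
  simp only [Set.mem_preimage, mem_cylinder]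
  rfl

theorem shiftCylMeasure (μ : Measure (G → Bool))
    (hμ : ∀ (F₀ : Finset G) (t : G → Bool),
      μ {x | ∀ δ ∈ F₀, x δ = t δ} = (1 / 2 : ℝ≥0∞) ^ F₀.card)
    (γ : G) (s : Finset G) (S : Set (∀ i : s, Bool)) :
    μ ((fun (x : G → Bool) δ => x (γ⁻¹ * δ)) ⁻¹' (cylinder s S : Set (G → Bool)))
      = μ (cylinder s S : Set (G → Bool)) := by
  rw [shiftPreimageCyl, cylMeasure _ hμ, cylMeasure _ hμ]
  have hcard : (s.image fun δ => γ⁻¹ * δ).card = s.card :=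
    Finset.card_image_of_injective s (mul_right_injective γ⁻¹)
  have hncard : ((fun (f : ∀ _ : {x // x ∈ s.image fun δ => γ⁻¹ * δ}, Bool) (i : s) =>
      f (shiftEquiv γ s i)) ⁻¹' S).ncard = S.ncard := by
    have hm : (fun (f : ∀ _ : {x // x ∈ s.image fun δ => γ⁻¹ * δ}, Bool) (i : s) =>
        f (shiftEquiv γ s i)) = ⇑(Equiv.arrowCongr (shiftEquiv γ s).symm (Equiv.refl Bool)) := by
      funext f; rfl
    have h2 : ⇑((shiftEquiv γ s).symm.arrowCongr (Equiv.refl Bool)) ⁻¹' S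
        = ⇑((shiftEquiv γ s).symm.arrowCongr (Equiv.refl Bool)).symm '' S := by
      rw [Equiv.image_eq_preimage_symm, Equiv.symm_symm]
    rw [hm, h2]
    exact Set.ncard_image_of_injective S (Equiv.injective _)
  rw [hcard, hncard]

theorem shiftMap (μ : Measure (G → Bool)) [IsProbabilityMeasure μ]
    (hμ : ∀ (F₀ : Finset G) (t : G → Bool),
      μ {x | ∀ δ ∈ F₀, x δ = t δ} = (1 / 2 : ℝ≥0∞) ^ F₀.card)
    (γ : G) :
    μ.map (fun (x : G → Bool) δ => x (γ⁻¹ * δ)) = μ := by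
  have hmeas : Measurable (fun (x : G → Bool) δ => x (γ⁻¹ * δ)) :=
    measurable_pi_lambda _ fun δ => measurable_pi_apply _
  haveI := Measure.isProbabilityMeasure_map (μ := μ) hmeas.aemeasurable
  refine ext_of_generate_finite _ generateFrom_measurableCylinders.symm
    isPiSystem_measurableCylinders (fun A hA => ?_) (by simp)
  obtain ⟨s, S, hSm, rfl⟩ := (mem_measurableCylinders A).1 hA
  rw [Measure.map_apply hmeas (MeasurableSet.cylinder s hSm), shiftCylMeasure μ hμ]

end Shift

/-- **Statement 16.** Let `Γ` be a countable subgroup of the multiplicative group of positive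
reals (realized as a subgroup of `ℝˣ` all of whose elements are positive) that is dense in
`ℝ_{>0}`, and let `μ` be the Bernoulli(1/2) product probability measure on `X = Γ → Bool`
(characterized by its values on cylinder sets). For `γ ∈ Γ` let `s_γ : X → X` be the shift
`(s_γ x)(δ) = x(γ⁻¹ δ)`. Then for every measurable `E ⊆ X` with `μ(E) > 0` and every real
`r > 0`, `r` belongs to the closure in `ℝ` of `{γ ∈ Γ : μ(s_γ⁻¹(E) ∩ E) > 0}`. -/
theorem stmt16 (Γ : Subgroup ℝˣ) (hΓpos : ∀ x ∈ Γ, (0 : ℝ) < (x : ℝ))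
    [Countable Γ]
    (hdense : ∀ r : ℝ, 0 < r → r ∈ closure {y : ℝ | ∃ γ ∈ Γ, (γ : ℝ) = y})
    (μ : Measure (Γ → Bool)) [IsProbabilityMeasure μ]
    (hμ : ∀ (F₀ : Finset Γ) (t : Γ → Bool),
      μ {x | ∀ δ ∈ F₀, x δ = t δ} = (1 / 2 : ℝ≥0∞) ^ F₀.card)
    (E : Set (Γ → Bool)) (hE : MeasurableSet E) (hEpos : 0 < μ E)
    (r : ℝ) (hr : 0 < r) :
    r ∈ closure {y : ℝ | ∃ γ : Γ, ((γ : ℝˣ) : ℝ) = y ∧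
      0 < μ ((fun x : Γ → Bool => fun δ : Γ => x (γ⁻¹ * δ)) ⁻¹' E ∩ E)} := by
  classical
  set a : ℝ := (μ E).toReal with ha_def
  have ha : 0 < a := ENNReal.toReal_pos hEpos.ne' (measure_ne_top μ E)
  have ha1 : a ≤ 1 := by
    rw [ha_def]
    simpa using ENNReal.toReal_mono ENNReal.one_ne_top (prob_le_one (μ := μ) (s := E))
  set ε : ℝ := a ^ 2 / 8 with hε_def
  have hε : 0 < ε := by positivity
  -- approximation by a cylinder
  have halg : IsSetAlgebra (measurableCylinders fun _ : Γ => Bool) :=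
    ⟨empty_mem_measurableCylinders _, fun _ h => compl_mem_measurableCylinders h,
     fun _ _ h h' => union_mem_measurableCylinders h h'⟩
  obtain ⟨C, hCmem, hsym⟩ :=
    (Measure.MeasureDense.of_generateFrom_isSetAlgebra_finite (μ := μ) halg
      generateFrom_measurableCylinders.symm).approx E hE (measure_ne_top μ E) ε hε
  obtain ⟨s, S, hSm, rfl⟩ := (mem_measurableCylinders C).1 hCmem
  have hCmeas : MeasurableSet (cylinder s S : Set (Γ → Bool)) := MeasurableSet.cylinder s hSm
  -- key positivity claim for good γ
  have key : ∀ γ : Γ, Disjoint (s.image fun δ => γ⁻¹ * δ) s →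
      0 < μ ((fun x : Γ → Bool => fun δ : Γ => x (γ⁻¹ * δ)) ⁻¹' E ∩ E) := by
    intro γ hdisj
    set T : (Γ → Bool) → (Γ → Bool) := fun x δ => x (γ⁻¹ * δ) with hT_def
    have hmeas : Measurable T := measurable_pi_lambda _ fun δ => measurable_pi_apply _
    have hmap : μ.map T = μ := shiftMap μ hμ γ
    set C : Set (Γ → Bool) := (cylinder s S : Set (Γ → Bool)) with hC_def
    rw [pos_iff_ne_zero]
    intro hzero
    have hsub : T ⁻¹' C ∩ C ⊆ ((T ⁻¹' E ∩ E) ∪ T ⁻¹' (C \ E)) ∪ (C \ E) := by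
      intro x hx
      simp only [Set.mem_inter_iff, Set.mem_union, Set.mem_preimage, Set.mem_diff] at *
      tauto
    have hstep : μ (T ⁻¹' C ∩ C) ≤ μ (T ⁻¹' E ∩ E) + μ (T ⁻¹' (C \ E)) + μ (C \ E) :=
      le_trans (measure_mono hsub)
        (le_trans (measure_union_le _ _) (add_le_add (measure_union_le _ _) le_rfl))
    have hpre : μ (T ⁻¹' (C \ E)) = μ (C \ E) := by
      conv_rhs => rw [← hmap]
      rw [Measure.map_apply hmeas (hCmeas.diff hE)]
    have hdiffle : μ (C \ E) ≤ μ (E ∆ C) :=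
      measure_mono fun x hx => Set.mem_symmDiff.2 (Or.inr ⟨hx.1, hx.2⟩)
    have hprod : μ (T ⁻¹' C ∩ C) = μ C * μ C := by
      have h1 : μ (T ⁻¹' C ∩ C) = μ (T ⁻¹' C) * μ C := by
        rw [hC_def, hT_def, shiftPreimageCyl]
        exact cylInter μ hμ _ s hdisj _ S
      rw [h1, shiftCylMeasure μ hμ γ s S]
    have hEC : μ E ≤ μ C + μ (E ∆ C) := by
      refine le_trans (measure_mono fun x hx => ?_) (measure_union_le _ _)
      by_cases hxC : x ∈ C
      · exact Or.inl hxC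
      · exact Or.inr (Set.mem_symmDiff.2 (Or.inl ⟨hx, hxC⟩))
    -- pass to real numbers
    set c : ℝ := (μ C).toReal with hc_def
    set d : ℝ := (μ (E ∆ C)).toReal with hd_def
    have hdfin : μ (E ∆ C) ≠ ⊤ := measure_ne_top _ _
    have hd : d < ε := ENNReal.toReal_lt_of_lt_ofReal hsym
    have hac : a ≤ c + d := by
      rw [ha_def, hc_def, hd_def, ← ENNReal.toReal_add (measure_ne_top _ _) hdfin]
      exact ENNReal.toReal_mono (by finiteness) hEC
    have hcc : c * c ≤ 2 * d := by
      have h2 : μ C * μ C ≤ 2 * μ (E ∆ C) := by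
        calc μ C * μ C = μ (T ⁻¹' C ∩ C) := hprod.symm
          _ ≤ μ (T ⁻¹' E ∩ E) + μ (T ⁻¹' (C \ E)) + μ (C \ E) := hstep
          _ = μ (C \ E) + μ (C \ E) := by rw [hzero, hpre, zero_add]
          _ ≤ μ (E ∆ C) + μ (E ∆ C) := add_le_add hdiffle hdiffle
          _ = 2 * μ (E ∆ C) := (two_mul _).symm
      have := ENNReal.toReal_mono (by finiteness) h2
      rwa [ENNReal.toReal_mul, ENNReal.toReal_mul, ENNReal.toReal_ofNat] at this
    have hd0 : 0 ≤ d := ENNReal.toReal_nonneg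
    have hc0 : 0 ≤ c := ENNReal.toReal_nonneg
    have h1 : a * d ≤ d := mul_le_of_le_one_left hd0 ha1
    have h2 : a * a ≤ a := mul_le_of_le_one_left (le_of_lt ha) ha1
    have had : 0 ≤ a - d := by nlinarith [hd, hε_def]
    have hca : a - d ≤ c := by linarith
    have hsq : (a - d) * (a - d) ≤ c * c := mul_self_le_mul_self had hca
    nlinarith [hsq, h1, h2, hd, mul_pos ha ha, sq_nonneg d]
  -- density argument
  rw [Metric.mem_closure_iff]
  intro ε' hε'
  set B : Finset ℝ := (s ×ˢ s).image
    (fun p => ((p.1 : ℝˣ) : ℝ) * (((p.2 : ℝˣ) : ℝ))⁻¹) with hB_def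
  set lo : ℝ := max (r - ε' / 2) (r / 2) with hlo_def
  set hi : ℝ := r + ε' / 2 with hhi_def
  have hlopos : 0 < lo := lt_of_lt_of_le (by positivity) (le_max_right _ _)
  have hlor : lo < r := max_lt (by linarith) (by linarith)
  have hlohi : lo < hi := lt_trans hlor (by rw [hhi_def]; linarith)
  obtain ⟨r'', hr''I, hr''B⟩ := (Set.Ioo_infinite hlohi).exists_notMem_finset B
  have hr''pos : 0 < r'' := lt_trans hlopos hr''I.1
  set F : Finset ℝ := insert lo (insert hi B) with hF_def
  set m : ℝ := (F.image fun b => |r'' - b|).min' ⟨|r'' - lo|, Finset.mem_image_of_mem _ (Finset.mem_insert_self _ _)⟩ with hm_def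
  have hmle : ∀ b ∈ F, m ≤ |r'' - b| := fun b hb =>
    Finset.min'_le _ _ (Finset.mem_image_of_mem _ hb)
  have hm : 0 < m := by
    rw [hm_def]; refine (Finset.lt_min'_iff _ _).2 ?_
    intro y hy
    obtain ⟨b, hb, rfl⟩ := Finset.mem_image.1 hy
    rw [hF_def] at hb
    simp only [Finset.mem_insert] at hb
    rcases hb with rfl | rfl | hb
    · rw [abs_pos]; exact sub_ne_zero.2 (ne_of_gt hr''I.1)
    · rw [abs_pos]; exact sub_ne_zero.2 (ne_of_lt hr''I.2)
    · rw [abs_pos]; exact sub_ne_zero.2 (fun h => hr''B (h ▸ hb))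
  obtain ⟨y, hy, hry⟩ := Metric.mem_closure_iff.1 (hdense r'' hr''pos) m hm
  obtain ⟨g, hgΓ, rfl⟩ := hy
  rw [Real.dist_eq] at hry
  have hglo : lo < (g : ℝ) := by
    have h := hmle lo (Finset.mem_insert_self _ _)
    rw [abs_of_pos (by linarith [hr''I.1] : (0:ℝ) < r'' - lo)] at h
    linarith [le_abs_self (r'' - (g : ℝ))]
  have hghi : (g : ℝ) < hi := by
    have h := hmle hi (Finset.mem_insert_of_mem (Finset.mem_insert_self _ _))
    rw [abs_of_neg (by linarith [hr''I.2] : r'' - hi < 0)] at h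
    linarith [le_abs_self ((g : ℝ) - r''), abs_sub_comm r'' (g : ℝ)]
  have hgB : (g : ℝ) ∉ B := by
    intro hgB
    have h := hmle (g : ℝ) (Finset.mem_insert_of_mem (Finset.mem_insert_of_mem hgB))
    have : (0:ℝ) < |r'' - (g : ℝ)| := lt_of_lt_of_le hm h
    linarith [h, hry]
  set γ : Γ := ⟨g, hgΓ⟩ with hγ_def
  have hdisj : Disjoint (s.image fun δ => γ⁻¹ * δ) s := by
    rw [Finset.disjoint_left]
    rintro δ hδim hδs
    obtain ⟨δ₁, hδ₁, hδeq⟩ := Finset.mem_image.1 hδim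
    apply hgB
    have hγval : γ = δ₁ * δ⁻¹ := by rw [← hδeq]; group
    have hval : ((δ₁ : ℝˣ) : ℝ) * (((δ : ℝˣ) : ℝ))⁻¹ = (g : ℝ) := by
      have h2 : (γ : ℝˣ) = (δ₁ : ℝˣ) * (δ : ℝˣ)⁻¹ := by
        rw [hγval]; push_cast; ring
      have h3 : ((γ : ℝˣ) : ℝ) = (g : ℝ) := rfl
      rw [← h3, h2, Units.val_mul, Units.val_inv_eq_inv_val]
    exact Finset.mem_image.2 ⟨(δ₁, δ), Finset.mem_product.2 ⟨hδ₁, hδs⟩, hval⟩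
  refine ⟨(g : ℝ), ⟨γ, rfl, key γ hdisj⟩, ?_⟩
  rw [Real.dist_eq, abs_sub_lt_iff]
  have hlo2 : r - ε' / 2 ≤ lo := le_max_left _ _
  rw [hhi_def] at hghi
  constructor <;> linarith
end
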